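/- arXiv:2206.01564 — 2 statements merged into one kernel-verified Lean document; each statement's English description precedes it below -/
import Mathlib

section
/- Let R be a commutative ring. Consider the set Disc(R) of isomorphism classes of pairs (M, φ) where M is an invertible (rank-one projective) R-module and φ : R ≅ M ⊗ M is an isomorphism, with group law induced by tensor product. Then there is a short exact sequence of abelian groups 0 → R^×/(R^×)^2 → Disc(R) → Pic(R)[2] → 0, where the first map sends a unit u to (R, multiplication by u) and the second sends (M, φ) to the class of M, and Pic(R)[2] denotes the 2-torsion subgroup of the Picard group. -/
open TensorProduct

/-- An `R`-module is invertible if it admits a tensor inverse (equivalently, it is a rank-one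
finitely generated projective module). -/
def IsInvertibleModule (R : Type) [CommRing R] (M : Type) [AddCommGroup M] [Module R M] :
    Prop :=
  ∃ N : ModuleCat.{0} R, Nonempty ((M ⊗[R] N) ≃ₗ[R] R)

/-- Multiplication by a unit `u`, as a linear automorphism of `R`. -/
noncomputable def mulUnit (R : Type) [CommRing R] (u : Rˣ) : R ≃ₗ[R] R :=
  LinearEquiv.ofLinear (LinearMap.toSpanSingleton R R (u : R))
    (LinearMap.toSpanSingleton R R ((u⁻¹ : Rˣ) : R))
    (by ext; simp [smul_eq_mul, mul_assoc])
    (by ext; simp [smul_eq_mul, mul_assoc])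

/-- The pair `(R, multiplication by u)`: the isomorphism `R ≅ R ⊗ R`, `x ↦ (x·u) ⊗ 1`. -/
noncomputable def unitPair (R : Type) [CommRing R] (u : Rˣ) : R ≃ₗ[R] R ⊗[R] R :=
  (mulUnit R u).trans (TensorProduct.lid R R).symm

/-- Isomorphism of pairs `(M, φ)` and `(N, ψ)`: a linear isomorphism `e : M → N` with
`(e ⊗ e) ∘ φ = ψ`. -/
def PairIso (R : Type) [CommRing R] {M N : Type} [AddCommGroup M] [Module R M]
    [AddCommGroup N] [Module R N]
    (φ : R ≃ₗ[R] M ⊗[R] M) (ψ : R ≃ₗ[R] N ⊗[R] N) : Prop :=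
  ∃ e : M ≃ₗ[R] N, ∀ x : R, TensorProduct.congr e e (φ x) = ψ x

/-- The tensor product of two pairs `(M, φ)` and `(N, ψ)`: the underlying module is
`M ⊗ N` and the isomorphism `R ≅ (M ⊗ N) ⊗ (M ⊗ N)` is induced by `φ ⊗ ψ` and the shuffle. -/
noncomputable def tensorPair (R : Type) [CommRing R] {M N : Type}
    [AddCommGroup M] [Module R M] [AddCommGroup N] [Module R N]
    (φ : R ≃ₗ[R] M ⊗[R] M) (ψ : R ≃ₗ[R] N ⊗[R] N) :
    R ≃ₗ[R] (M ⊗[R] N) ⊗[R] (M ⊗[R] N) :=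
  ((TensorProduct.lid R R).symm.trans (TensorProduct.congr φ ψ)).trans
    (TensorProduct.tensorTensorTensorComm R M M N N)


lemma unitPair_apply (R : Type) [CommRing R] (u : Rˣ) (x : R) :
    unitPair R u x = 1 ⊗ₜ[R] (x * u) := by
  simp [unitPair, mulUnit, LinearMap.toSpanSingleton, smul_eq_mul]

lemma lin_apply (R : Type) [CommRing R] (e : R ≃ₗ[R] R) (x : R) : e x = x * e 1 := by
  conv_lhs => rw [show x = x • (1:R) by simp]
  rw [map_smul]; simp [smul_eq_mul]

lemma unit_part1 (R : Type) [CommRing R] (u v : Rˣ)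
    (e : R ≃ₗ[R] R) (he : ∀ x : R, TensorProduct.congr e e (unitPair R u x) = unitPair R v x) :
    ∃ w : Rˣ, u = v * w * w := by
  have hu : IsUnit (e 1) := by
    refine IsUnit.of_mul_eq_one (e.symm 1) ?_
    have : e (e.symm 1) = 1 := e.apply_symm_apply 1
    rw [lin_apply R e (e.symm 1)] at this
    rw [mul_comm]; exact this
  have h1 := he 1
  rw [unitPair_apply, unitPair_apply, one_mul, one_mul, TensorProduct.congr_tmul,
    lin_apply R e (u : R)] at h1
  have h2 := congrArg (TensorProduct.lid R R) h1
  simp [smul_eq_mul] at h2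
  refine ⟨hu.unit⁻¹, Units.ext ?_⟩
  have hs : (hu.unit : R) = e 1 := hu.unit_spec
  have hinv : ((hu.unit⁻¹ : Rˣ) : R) * e 1 = 1 := by
    have h3 := Units.inv_mul hu.unit
    rwa [hs] at h3
  rw [Units.val_mul, Units.val_mul, ← h2]
  calc (u : R) = (u:R) * (((hu.unit⁻¹:Rˣ):R) * e 1) * (((hu.unit⁻¹:Rˣ):R) * e 1) := by
        rw [hinv]; ring
    _ = e 1 * (↑u * e 1) * ↑hu.unit⁻¹ * ↑hu.unit⁻¹ := by ring

lemma unit_part1' (R : Type) [CommRing R] (u v w : Rˣ) (h : u = v * w * w) (x : R) :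
    TensorProduct.congr (mulUnit R w⁻¹) (mulUnit R w⁻¹) (unitPair R u x) = unitPair R v x := by
  have hmu : ∀ y : R, mulUnit R w⁻¹ y = y * (↑w⁻¹ : R) := fun y => by
    simp [mulUnit, LinearMap.toSpanSingleton, smul_eq_mul]
  rw [unitPair_apply, unitPair_apply, TensorProduct.congr_tmul, hmu, hmu]
  apply (TensorProduct.lid R R).injective
  simp only [TensorProduct.lid_tmul, smul_eq_mul]
  have h' : (↑w⁻¹ : R) * ↑w⁻¹ * ↑u = ↑v := by
    rw [h]; push_cast
    calc (↑w⁻¹ : R) * ↑w⁻¹ * (↑v * ↑w * ↑w) = ↑v * ((↑w⁻¹ : R) * ↑w) * ((↑w⁻¹:R) * ↑w) := by ring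
      _ = ↑v := by rw [Units.inv_mul]; ring
  linear_combination x * h'

lemma part2 (R : Type) [CommRing R] (u v : Rˣ) (x : R) :
    TensorProduct.congr (TensorProduct.lid R R).symm (TensorProduct.lid R R).symm
      (unitPair R (u * v) x) = tensorPair R (unitPair R u) (unitPair R v) x := by
  have hrhs : tensorPair R (unitPair R u) (unitPair R v) x
      = (TensorProduct.tensorTensorTensorComm R R R R R)
          ((1 ⊗ₜ[R] (u:R)) ⊗ₜ[R] (1 ⊗ₜ[R] (x * v))) := by
    simp only [tensorPair, LinearEquiv.trans_apply, TensorProduct.lid_symm_apply,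
      TensorProduct.congr_tmul, unitPair_apply, one_mul]
  rw [hrhs, unitPair_apply, TensorProduct.congr_tmul, TensorProduct.lid_symm_apply,
    TensorProduct.lid_symm_apply, TensorProduct.tensorTensorTensorComm_tmul]
  congr 1
  apply (TensorProduct.lid R R).injective
  simp only [TensorProduct.lid_tmul, smul_eq_mul]
  push_cast; ring

lemma part3 (R : Type) [CommRing R] (M : Type) [AddCommGroup M] [Module R M]
    (φ : R ≃ₗ[R] M ⊗[R] M) (e : M ≃ₗ[R] R) :
    ∃ u : Rˣ, ∀ x : R, TensorProduct.congr e e (φ x) = unitPair R u x := by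
  set f : R ≃ₗ[R] R := (φ.trans (TensorProduct.congr e e)).trans (TensorProduct.lid R R) with hf
  have hu : IsUnit (f 1) := by
    refine IsUnit.of_mul_eq_one (f.symm 1) ?_
    have : f (f.symm 1) = 1 := f.apply_symm_apply 1
    rw [lin_apply R f (f.symm 1)] at this
    rw [mul_comm]; exact this
  refine ⟨hu.unit, fun x => ?_⟩
  apply (TensorProduct.lid R R).injective
  have hL : (TensorProduct.lid R R) (TensorProduct.congr e e (φ x)) = f x := rfl
  rw [hL, unitPair_apply, lin_apply R f x]
  simp [smul_eq_mul, hu.unit_spec]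

/-- The short exact sequence `0 → R^×/(R^×)² → Disc(R) → Pic(R)[2] → 0`, stated elementwise
on isomorphism classes of pairs `(M, φ : R ≅ M ⊗ M)` with `M` invertible:
(i) the map `u ↦ (R, ·u)` identifies two units exactly when they differ by a square
    (injectivity of `R^×/(R^×)² → Disc(R)`);
(ii) this map is a group homomorphism for the tensor-product group law on pairs;
(iii) a pair `(M, φ)` has trivial image in `Pic(R)` (i.e. `M ≅ R`) exactly when it is
    isomorphic to `(R, ·u)` for some unit `u` (exactness in the middle);
(iv) the image of a pair in `Pic(R)` is `2`-torsion, and every `2`-torsion class of `Pic(R)`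
    is the image of some pair (surjectivity onto `Pic(R)[2]`). -/
theorem disc_short_exact_sequence (R : Type) [CommRing R] :
    (∀ u v : Rˣ, PairIso R (unitPair R u) (unitPair R v) ↔ ∃ w : Rˣ, u = v * w * w) ∧
    (∀ u v : Rˣ,
      PairIso R (unitPair R (u * v)) (tensorPair R (unitPair R u) (unitPair R v))) ∧
    (∀ (M : Type) [AddCommGroup M] [Module R M] (φ : R ≃ₗ[R] M ⊗[R] M),
      IsInvertibleModule R M →
      (Nonempty (M ≃ₗ[R] R) ↔ ∃ u : Rˣ, PairIso R φ (unitPair R u))) ∧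
    (∀ (M : Type) [AddCommGroup M] [Module R M] (_φ : R ≃ₗ[R] M ⊗[R] M),
      IsInvertibleModule R M → Nonempty ((M ⊗[R] M) ≃ₗ[R] R)) ∧
    (∀ (M : Type) [AddCommGroup M] [Module R M], IsInvertibleModule R M →
      Nonempty ((M ⊗[R] M) ≃ₗ[R] R) → ∃ _φ : R ≃ₗ[R] M ⊗[R] M, True) := by
  refine ⟨?_, ?_, ?_, ?_, ?_⟩
  · intro u v
    exact ⟨fun ⟨e, he⟩ => unit_part1 R u v e he,
      fun ⟨w, hw⟩ => ⟨mulUnit R w⁻¹, unit_part1' R u v w hw⟩⟩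
  · intro u v
    exact ⟨(TensorProduct.lid R R).symm, part2 R u v⟩
  · intro M _ _ φ _
    exact ⟨fun ⟨e⟩ => (part3 R M φ e).imp (fun u h => ⟨e, h⟩), fun ⟨_, e, _⟩ => ⟨e⟩⟩
  · intro M _ _ φ _
    exact ⟨φ.symm⟩
  · intro M _ _ _ h
    exact ⟨h.some.symm, trivial⟩
end

section
/- Let Z_ε = ℤ[ε]/(ε^2 − 1) and h = 1 + ε. Let M be the 8 × 8 matrix over Z_ε given by M = A − h·I, where A is the adjacency matrix of the E_8 Dynkin tree with vertices 1,...,8, edges {1,2}, {2,3}, {3,4}, {4,5}, {5,6}, {6,7} and {5,8}. Then M is invertible over Z_ε. -/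
/-- The ring `ℤ[ε]/(ε² − 1)`, realized as `ℤ[X]/(X² − 1)`. -/
abbrev Zeps : Type := Polynomial ℤ ⧸ Ideal.span {(Polynomial.X : Polynomial ℤ) ^ 2 - 1}

/-- The class `ε` of `X` in `ℤ[X]/(X² − 1)`. -/
noncomputable def eps : Zeps := Ideal.Quotient.mk _ Polynomial.X

/-- The hyperbolic element `h = 1 + ε`. -/
noncomputable def hq : Zeps := 1 + eps

/-- The 0-1 adjacency matrix of the `E₈` Dynkin tree on vertices `0,…,7` (1-indexed `1,…,8`),
with edges `{1,2},{2,3},{3,4},{4,5},{5,6},{6,7},{5,8}` (0-indexed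
`(0,1),(1,2),(2,3),(3,4),(4,5),(5,6),(4,7)`). -/
noncomputable def E8adj : Matrix (Fin 8) (Fin 8) Zeps := fun i j =>
  if ((i.val, j.val) ∈
      [(0,1),(1,2),(2,3),(3,4),(4,5),(5,6),(4,7),
       (1,0),(2,1),(3,2),(4,3),(5,4),(6,5),(7,4)] : Prop) then 1 else 0

lemma eps_sq : eps ^ 2 = 1 := by
  have h : (eps ^ 2 - 1 : Zeps) = 0 := by
    rw [eps, ← map_pow,
      ← map_one (Ideal.Quotient.mk (Ideal.span {(Polynomial.X : Polynomial ℤ) ^ 2 - 1})),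
      ← map_sub]
    exact Ideal.Quotient.eq_zero_iff_mem.mpr (Ideal.subset_span rfl)
  exact sub_eq_zero.mp h

@[simp] lemma cons_val_five {α : Type*} {m : ℕ} (x : α) (u : Fin (m+5) → α) :
    Matrix.vecCons x u 5 =
      Matrix.vecHead (Matrix.vecTail (Matrix.vecTail (Matrix.vecTail (Matrix.vecTail u)))) := rfl
@[simp] lemma cons_val_six {α : Type*} {m : ℕ} (x : α) (u : Fin (m+6) → α) :
    Matrix.vecCons x u 6 =
      Matrix.vecHead (Matrix.vecTail (Matrix.vecTail (Matrix.vecTail (Matrix.vecTail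
        (Matrix.vecTail u))))) := rfl
@[simp] lemma cons_val_seven {α : Type*} {m : ℕ} (x : α) (u : Fin (m+7) → α) :
    Matrix.vecCons x u 7 =
      Matrix.vecHead (Matrix.vecTail (Matrix.vecTail (Matrix.vecTail (Matrix.vecTail
        (Matrix.vecTail (Matrix.vecTail u)))))) := rfl

/-- An explicit inverse of the `E₈` Mumford matrix over `Z_ε`. -/
noncomputable def Ninv : Matrix (Fin 8) (Fin 8) Zeps :=
  !![(-1) + (-1) * eps, (-1) + (-2) * eps, (-2) + (-2) * eps, (-3) + (-2) * eps, (-3) + (-3) * eps, (-2) + (-2) * eps, (-1) + (-1) * eps, (-1) + (-2) * eps;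
     (-1) + (-2) * eps, (-3) + (-3) * eps, (-4) + (-4) * eps, (-5) + (-5) * eps, (-6) + (-6) * eps, (-4) + (-4) * eps, (-2) + (-2) * eps, (-3) + (-3) * eps;
     (-2) + (-2) * eps, (-4) + (-4) * eps, (-6) + (-6) * eps, (-7) + (-8) * eps, (-9) + (-9) * eps, (-6) + (-6) * eps, (-3) + (-3) * eps, (-5) + (-4) * eps;
     (-3) + (-2) * eps, (-5) + (-5) * eps, (-7) + (-8) * eps, (-10) + (-10) * eps, (-12) + (-12) * eps, (-8) + (-8) * eps, (-4) + (-4) * eps, (-6) + (-6) * eps;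
     (-3) + (-3) * eps, (-6) + (-6) * eps, (-9) + (-9) * eps, (-12) + (-12) * eps, (-15) + (-15) * eps, (-10) + (-10) * eps, (-5) + (-5) * eps, (-7) + (-8) * eps;
     (-2) + (-2) * eps, (-4) + (-4) * eps, (-6) + (-6) * eps, (-8) + (-8) * eps, (-10) + (-10) * eps, (-7) + (-7) * eps, (-3) + (-4) * eps, (-5) + (-5) * eps;
     (-1) + (-1) * eps, (-2) + (-2) * eps, (-3) + (-3) * eps, (-4) + (-4) * eps, (-5) + (-5) * eps, (-3) + (-4) * eps, (-2) + (-2) * eps, (-3) + (-2) * eps;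
     (-1) + (-2) * eps, (-3) + (-3) * eps, (-5) + (-4) * eps, (-6) + (-6) * eps, (-7) + (-8) * eps, (-5) + (-5) * eps, (-3) + (-2) * eps, (-4) + (-4) * eps]

set_option maxHeartbeats 8000000 in
lemma E8_mumford_mul_Ninv :
    (E8adj - hq • (1 : Matrix (Fin 8) (Fin 8) Zeps)) * Ninv = 1 := by
  ext i k
  fin_cases i <;> fin_cases k <;>
  · simp only [Matrix.mul_apply, Fin.sum_univ_succ, Fin.sum_univ_zero, Matrix.sub_apply,
      Matrix.smul_apply, Matrix.one_apply, smul_eq_mul, E8adj, Ninv, List.mem_cons,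
      List.not_mem_nil, Prod.mk.injEq, Matrix.cons_val_zero, Matrix.cons_val_one,
      Matrix.cons_val_two, Matrix.cons_val_three, Matrix.cons_val_four, cons_val_five,
      cons_val_six, cons_val_seven, Matrix.head_cons, Matrix.vecHead, Matrix.vecTail,
      Matrix.cons_val_fin_one, Matrix.empty_val', Function.comp,
      Matrix.cons_val_succ, Fin.val_zero, Fin.val_succ, Fin.isValue, Matrix.of_apply]
    norm_num [hq, Fin.ext_iff]
    try ring_nf
    try simp only [eps_sq]
    try ring_nf

/-- The quadratic Mumford matrix `M = A − h·I` of the `E₈` Du Val singularity is invertible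
over `Z_ε = ℤ[ε]/(ε² − 1)`. -/
theorem E8_mumford_matrix_isUnit :
    IsUnit (E8adj - hq • (1 : Matrix (Fin 8) (Fin 8) Zeps)).det :=
  Matrix.isUnit_det_of_right_inverse E8_mumford_mul_Ninv
end
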